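/- Assume: φ ∈ C([0,∞)) ∩ C¹((0,∞)) with φ(0) = 0, φ' > 0 on (0,∞), and t·φ'(t) ≤ C·φ(t) for every t > 0, for some constant C > 0. Fix χ > 0 and let f ∈ C(ℝ) be positive and C-increasing on (η̄₀,∞) for some η̄₀ > 0. Fix r₀ > 0; let β ∈ C([r₀,∞)) with β > 0, and β̄ ∈ C¹([r₀,∞)) with β̄ > 0, β̄' ≤ 0 and ∫_{r₀}^∞ β̄ = ∞; let θ ∈ C([r₀,∞)) be nonnegative with max{β̄,θ}·β̄^{χ}/β bounded on [r₀,∞). Set F(t) = ∫_{η̄₀}^t f(s) ds and assume ∫_T^∞ F(s)^{−1/(χ+1)} ds < ∞ for some T > η̄₀. Then for every ε > 0, every 0 < δ < λ and every r₁ > r₀, there exist R₁ > r₁ and a C¹ function w : [r₀,R₁) → [η̄₀+δ,∞) such that: φ∘w' is differentiable on (r₀,R₁) and (φ(w'))'(r) + θ(r)·φ(w'(r)) ≤ ε·β(r)·f(w(r))·φ(w'(r))/(w'(r))^{χ} on (r₀,R₁); w' > 0 on [r₀,R₁); w(r) → ∞ as r → R₁⁻; and η̄₀+δ ≤ w ≤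 η̄₀+λ on [r₀,r₁]. -/

import Mathlib

open Set MeasureTheory Filter Topology

/-- Given `C ≥ 1`, a function `h` is `C`-increasing on `I` if
`sup {h s : s ∈ I, s ≤ t} ≤ C * h t` for every `t ∈ I`. -/
def CIncreasingOn (C : ℝ) (h : ℝ → ℝ) (I : Set ℝ) : Prop :=
  ∀ s ∈ I, ∀ t ∈ I, s ≤ t → h s ≤ C * h t

/-- An order inverse for a strictly monotone differentiable function with range `Iio I`. -/
lemma exists_inverse (G G' : ℝ → ℝ) (I : ℝ) (hmono : StrictMono G)
    (hder : ∀ u, HasDerivAt G (G' u) u) (hpos : ∀ u, 0 < G' u)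
    (hlt : ∀ u, G u < I) (hsurj : ∀ y, y < I → ∃ u, G u = y) :
    ∃ Ginv : ℝ → ℝ, (∀ u, Ginv (G u) = u) ∧ (∀ y, y < I → G (Ginv y) = y) ∧
      (∀ y, y < I → HasDerivAt Ginv (G' (Ginv y))⁻¹ y) := by
  classical
  set Ginv : ℝ → ℝ := fun y => if h : ∃ u, G u = y then h.choose else 0 with hGinv
  have hright : ∀ y, y < I → G (Ginv y) = y := by
    intro y hy
    have h : ∃ u, G u = y := hsurj y hy
    simp only [hGinv, dif_pos h]
    exact h.choose_spec
  have hleft : ∀ u, Ginv (G u) = u := by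
    intro u
    exact hmono.injective (hright (G u) (hlt u))
  have hcont : ∀ y, y < I → ContinuousAt Ginv y := by
    intro y hy
    rw [ContinuousAt, tendsto_order]
    constructor
    · intro a ha
      have h1 : G a < y := by
        rw [← hright y hy]; exact hmono ha
      filter_upwards [Ioo_mem_nhds h1 hy] with z hz
      have := hright z hz.2
      rw [← this] at hz
      exact hmono.lt_iff_lt.mp hz.1
    · intro b hb
      have h1 : y < G b := by
        rw [← hright y hy]; exact hmono hb
      filter_upwards [Iio_mem_nhds h1] with z hz
      have hzI : z < I := hz.trans (hlt b)
      have := hright z hzI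
      rw [← this] at hz
      exact hmono.lt_iff_lt.mp hz
  refine ⟨Ginv, hleft, hright, fun y hy => ?_⟩
  refine HasDerivAt.of_local_left_inverse (hcont y hy) (hder (Ginv y)) (hpos _).ne' ?_
  filter_upwards [Iio_mem_nhds hy] with z hz
  exact hright z hz

set_option maxHeartbeats 1600000 in
/-- Proposition 8.16: analogue of the blowing-up supersolution construction
for operators of mean curvature type (`t φ'(t) ≤ C φ(t)`), with gradient term
`l(t) = φ(t)/t^χ` and the modified Keller–Osserman condition
`F^(−1/(χ+1))` integrable at infinity. -/
theorem stmt_18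
    (φ φ' : ℝ → ℝ)
    (hφc : ContinuousOn φ (Ici 0)) (hφ0 : φ 0 = 0)
    (hφd : ∀ t : ℝ, 0 < t → HasDerivAt φ (φ' t) t)
    (hφ'c : ContinuousOn φ' (Ioi 0))
    (hφ'pos : ∀ t : ℝ, 0 < t → 0 < φ' t)
    (C : ℝ) (hC : 1 ≤ C)
    (hφbound : ∀ t : ℝ, 0 < t → t * φ' t ≤ C * φ t)
    (χ : ℝ) (hχ : 0 < χ)
    (ηb₀ : ℝ) (hηb₀ : 0 < ηb₀)
    (f : ℝ → ℝ) (hfc : Continuous f)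
    (hfpos : ∀ t : ℝ, ηb₀ < t → 0 < f t)
    (hfCinc : CIncreasingOn C f (Ioi ηb₀))
    (r₀ : ℝ) (hr₀ : 0 < r₀)
    (β : ℝ → ℝ) (hβc : ContinuousOn β (Ici r₀)) (hβpos : ∀ t ∈ Ici r₀, 0 < β t)
    (βb βb' : ℝ → ℝ)
    (hβbd : ∀ t ∈ Ici r₀, HasDerivWithinAt βb (βb' t) (Ici r₀) t)
    (hβb'c : ContinuousOn βb' (Ici r₀))
    (hβbpos : ∀ t ∈ Ici r₀, 0 < βb t)
    (hβb'np : ∀ t ∈ Ici r₀, βb' t ≤ 0)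
    (hβbnotint : ¬ IntegrableOn βb (Ioi r₀))
    (θ : ℝ → ℝ) (hθc : ContinuousOn θ (Ici r₀)) (hθnn : ∀ t ∈ Ici r₀, 0 ≤ θ t)
    (hbdd : ∃ M : ℝ, ∀ t ∈ Ici r₀, max (βb t) (θ t) * βb t ^ χ / β t ≤ M)
    (F : ℝ → ℝ) (hF : ∀ t, F t = ∫ s in ηb₀..t, f s)
    (hKO : ∃ T : ℝ, ηb₀ < T ∧
      IntegrableOn (fun s => F s ^ (-(1 / (χ + 1)))) (Ioi T)) :
    ∀ ε : ℝ, 0 < ε → ∀ δ lam : ℝ, 0 < δ → δ < lam → ∀ r₁ : ℝ, r₀ < r₁ →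
      ∃ R₁ : ℝ, r₁ < R₁ ∧ ∃ w w' g : ℝ → ℝ,
        (∀ r ∈ Ico r₀ R₁, HasDerivWithinAt w (w' r) (Ico r₀ R₁) r) ∧
        ContinuousOn w' (Ico r₀ R₁) ∧
        (∀ r ∈ Ico r₀ R₁, ηb₀ + δ ≤ w r) ∧
        (∀ r ∈ Ioo r₀ R₁, HasDerivAt (fun s => φ (w' s)) (g r) r) ∧
        (∀ r ∈ Ioo r₀ R₁,
          g r + θ r * φ (w' r) ≤ ε * β r * f (w r) * (φ (w' r) / w' r ^ χ)) ∧
        (∀ r ∈ Ico r₀ R₁, 0 < w' r) ∧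
        Tendsto w (𝓝[<] R₁) atTop ∧
        (∀ r ∈ Icc r₀ r₁, ηb₀ + δ ≤ w r ∧ w r ≤ ηb₀ + lam) := by
  intro ε hε δ lam hδ hδlam r₁ hr₁
  classical
  obtain ⟨M, hM⟩ := hbdd
  obtain ⟨T, hTgt, hKOi⟩ := hKO
  have hχ1 : (0:ℝ) < χ + 1 := by linarith
  have hC0 : (0:ℝ) < C := lt_of_lt_of_le one_pos hC
  set q : ℝ := 1 / (χ + 1) with hq
  have hq0 : 0 < q := by positivity
  -- basic facts about F
  have hFder : ∀ t, HasDerivAt F (f t) t := by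
    intro t
    have hfun : (fun u => ∫ s in ηb₀..u, f s) = F := funext fun t => (hF t).symm
    rw [← hfun]
    exact intervalIntegral.integral_hasDerivAt_right (hfc.intervalIntegrable _ _)
      hfc.stronglyMeasurable.stronglyMeasurableAtFilter hfc.continuousAt
  have hFcont : Continuous F := continuous_iff_continuousAt.2 fun t => (hFder t).continuousAt
  have hFpos : ∀ t, ηb₀ < t → 0 < F t := by
    intro t ht
    rw [hF t]
    exact intervalIntegral.intervalIntegral_pos_of_pos_on (hfc.intervalIntegrable _ _)
      (fun x hx => hfpos x hx.1) ht
  have hFmono : ∀ a b : ℝ, ηb₀ < a → a ≤ b → F a ≤ F b := by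
    intro a b ha hab
    have h1 : F a + ∫ s in a..b, f s = F b := by
      rw [hF a, hF b]
      exact intervalIntegral.integral_add_adjacent_intervals (hfc.intervalIntegrable _ _)
        (hfc.intervalIntegrable _ _)
    have h2 : 0 ≤ ∫ s in a..b, f s :=
      intervalIntegral.integral_nonneg hab fun u hu => (hfpos u (lt_of_lt_of_le ha hu.1)).le
    linarith
  set t₀ : ℝ := ηb₀ + δ with ht₀def
  have ht₀ : ηb₀ < t₀ := by rw [ht₀def]; linarith
  set ψ : ℝ → ℝ := fun s => F s ^ (-q) with hψdef
  have hψeq : ∀ s, ψ s = F s ^ (-q) := fun s => rfl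
  have hψpos : ∀ s, t₀ ≤ s → 0 < ψ s := fun s hs =>
    Real.rpow_pos_of_pos (hFpos s (ht₀.trans_le hs)) _
  have hψcont : ContinuousOn ψ (Ici t₀) :=
    ContinuousOn.rpow_const hFcont.continuousOn
      fun x hx => Or.inl (hFpos x (ht₀.trans_le hx)).ne'
  have hψanti : ∀ a b, t₀ ≤ a → a ≤ b → ψ b ≤ ψ a := by
    intro a b ha hab
    have hFa : 0 < F a := hFpos a (ht₀.trans_le ha)
    have hFab : F a ≤ F b := hFmono a b (ht₀.trans_le ha) hab
    rw [hψeq, hψeq, Real.rpow_neg (hFa.trans_le hFab).le, Real.rpow_neg hFa.le]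
    exact inv_anti₀ (Real.rpow_pos_of_pos hFa q)
      (Real.rpow_le_rpow hFa.le hFab hq0.le)
  set ψh : ℝ → ℝ := fun s => ψ (max s t₀) with hψhdef
  have hψheq : ∀ s, t₀ ≤ s → ψh s = ψ s := fun s hs => by
    simp only [hψhdef, max_eq_left hs]
  have hψhpos : ∀ s, 0 < ψh s := fun s => hψpos _ (le_max_right _ _)
  have hψhcont : Continuous ψh :=
    hψcont.comp_continuous (continuous_id.max continuous_const) fun x => mem_Ici.2 (le_max_right _ _)
  set m : ℝ := max T t₀ with hmdef
  have hmt₀ : t₀ ≤ m := le_max_right _ _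
  have hψint : IntegrableOn ψ (Ioi t₀) := by
    have h1 : IntegrableOn ψ (Ioc t₀ m) :=
      ((hψcont.mono Icc_subset_Ici_self).integrableOn_Icc).mono_set Ioc_subset_Icc_self
    have h2 : IntegrableOn ψ (Ioi m) := hKOi.mono_set (Ioi_subset_Ioi (le_max_left _ _))
    have h3 := h1.union h2
    rwa [Ioc_union_Ioi_eq_Ioi hmt₀] at h3
  have hψhint : IntegrableOn ψh (Ioi t₀) :=
    hψint.congr_fun (fun s hs => (hψheq s (le_of_lt hs)).symm) measurableSet_Ioi
  -- the function G and its inverse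
  set G : ℝ → ℝ := fun u => ∫ s in t₀..u, ψh s with hGdef
  have hGder : ∀ u, HasDerivAt G (ψh u) u := fun u =>
    intervalIntegral.integral_hasDerivAt_right (hψhcont.intervalIntegrable _ _)
      hψhcont.stronglyMeasurable.stronglyMeasurableAtFilter hψhcont.continuousAt
  have hGcont : Continuous G := continuous_iff_continuousAt.2 fun u => (hGder u).continuousAt
  have hGmono : StrictMono G := strictMono_of_deriv_pos fun u => by
    rw [(hGder u).deriv]; exact hψhpos u
  have hGt₀ : G t₀ = 0 := intervalIntegral.integral_same
  set I : ℝ := ∫ s in Ioi t₀, ψh s with hIdef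
  have hGle : ∀ u, G u ≤ I := by
    intro u
    rcases le_total u t₀ with h | h
    · have h0 : G u ≤ 0 := by rw [← hGt₀]; exact hGmono.monotone h
      have h1 : 0 ≤ I := setIntegral_nonneg measurableSet_Ioi fun s _ => (hψhpos s).le
      linarith
    · simp only [hGdef]
      rw [intervalIntegral.integral_of_le h]
      exact setIntegral_mono_set hψhint (ae_of_all _ fun s => (hψhpos s).le)
        Ioc_subset_Ioi_self.eventuallyLE
  have hGlt : ∀ u, G u < I := fun u => lt_of_lt_of_le (hGmono (lt_add_one u)) (hGle _)
  have hIpos : 0 < I := hGt₀ ▸ hGlt t₀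
  have hGtend : Tendsto G atTop (𝓝 I) := intervalIntegral_tendsto_integral_Ioi t₀ hψhint tendsto_id
  have hψt₀pos : 0 < ψ t₀ := hψpos t₀ le_rfl
  have hGlin : ∀ u, u ≤ t₀ → G u = ψ t₀ * (u - t₀) := by
    intro u hu
    have hcg : ∀ s ∈ uIcc t₀ u, ψh s = ψ t₀ := by
      intro s hs
      rw [uIcc_of_ge hu] at hs
      simp only [hψhdef, max_eq_right hs.2]
    simp only [hGdef]
    rw [intervalIntegral.integral_congr hcg, intervalIntegral.integral_const, smul_eq_mul]
    ring
  have hsurj : ∀ y, y < I → ∃ u, G u = y := by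
    intro y hy
    set u₁ : ℝ := t₀ + min y 0 / ψ t₀ with hu₁def
    have hu₁le : u₁ ≤ t₀ := by
      have h1 : min y 0 / ψ t₀ ≤ 0 :=
        div_nonpos_of_nonpos_of_nonneg (min_le_right _ _) hψt₀pos.le
      rw [hu₁def]; linarith
    have hGu₁ : G u₁ ≤ y := by
      rw [hGlin u₁ hu₁le]
      have h2 : ψ t₀ * (u₁ - t₀) = min y 0 := by
        rw [hu₁def]; field_simp; ring
      rw [h2]; exact min_le_left _ _
    obtain ⟨u₂, hu₂⟩ :=
      ((hGtend.eventually (eventually_gt_nhds hy)).and (eventually_ge_atTop u₁)).exists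
    obtain ⟨u, _, hu⟩ := intermediate_value_Icc hu₂.2 hGcont.continuousOn ⟨hGu₁, hu₂.1.le⟩
    exact ⟨u, hu⟩
  obtain ⟨Ginv, hleft, hright, hinvder⟩ := exists_inverse G ψh I hGmono hGder hψhpos hGlt hsurj
  -- the weight H
  have hβbcont : ContinuousOn βb (Ici r₀) := fun t ht => (hβbd t ht).continuousWithinAt
  set bb : ℝ → ℝ := fun t => βb (max t r₀) with hbbdef
  have hbbeq : ∀ t, r₀ ≤ t → bb t = βb t := fun t ht => by
    simp only [hbbdef, max_eq_left ht]
  have hbbpos : ∀ t, 0 < bb t := fun t => hβbpos _ (mem_Ici.2 (le_max_right _ _))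
  have hbbcont : Continuous bb :=
    hβbcont.comp_continuous (continuous_id.max continuous_const) fun x => mem_Ici.2 (le_max_right _ _)
  set H : ℝ → ℝ := fun r => ∫ s in r₀..r, bb s with hHdef
  have hHder : ∀ r, HasDerivAt H (bb r) r := fun r =>
    intervalIntegral.integral_hasDerivAt_right (hbbcont.intervalIntegrable _ _)
      hbbcont.stronglyMeasurable.stronglyMeasurableAtFilter hbbcont.continuousAt
  have hHcont : Continuous H := continuous_iff_continuousAt.2 fun u => (hHder u).continuousAt
  have hHmono : StrictMono H := strictMono_of_deriv_pos fun u => by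
    rw [(hHder u).deriv]; exact hbbpos u
  have hH0 : H r₀ = 0 := intervalIntegral.integral_same
  have hHtop : Tendsto H atTop atTop := by
    apply tendsto_atTop_atTop_of_monotone hHmono.monotone
    by_contra hbd
    push_neg at hbd
    obtain ⟨A, hA⟩ := hbd
    apply hβbnotint
    have hint : IntegrableOn bb (Ioi r₀) := by
      apply integrableOn_Ioi_of_intervalIntegral_norm_bounded A r₀
        (fun i : ℝ => hbbcont.integrableOn_Ioc) tendsto_id
      filter_upwards with i
      have heq : (∫ x in r₀..(id i), ‖bb x‖) = H i := by
        simp only [hHdef, id_eq]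
        apply intervalIntegral.integral_congr
        intro x _
        simp [Real.norm_eq_abs, abs_of_pos (hbbpos x)]
      rw [heq]
      exact (hA i).le
    exact hint.congr_fun (fun t ht => hbbeq t (le_of_lt ht)) measurableSet_Ioi
  have hHnn : ∀ r, r₀ ≤ r → 0 ≤ H r := fun r hr => hH0 ▸ hHmono.monotone hr
  have hHr₁ : 0 < H r₁ := hH0 ▸ hHmono hr₁
  set Jv : ℝ := G (ηb₀ + lam) with hJdef
  have hJlt : Jv < I := hGlt _
  have hJpos : 0 < Jv := by
    rw [hJdef, ← hGt₀]
    exact hGmono (by rw [ht₀def]; linarith)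
  -- constants M, M'
  have hMpos : 0 < M := by
    have h := hM r₀ self_mem_Ici
    have hb0 : 0 < βb r₀ := hβbpos r₀ self_mem_Ici
    have h2 : 0 < max (βb r₀) (θ r₀) * βb r₀ ^ χ / β r₀ :=
      div_pos (mul_pos (lt_of_lt_of_le hb0 (le_max_left _ _)) (Real.rpow_pos_of_pos hb0 _))
        (hβpos r₀ self_mem_Ici)
    linarith
  set Ibar : ℝ := ∫ s in Ioi m, ψh s with hIbardef
  have hIbarnn : 0 ≤ Ibar := setIntegral_nonneg measurableSet_Ioi fun s _ => (hψhpos s).le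
  set M' : ℝ := Ibar + (m - ηb₀) * ψ t₀ with hM'def
  have hM'pos : 0 < M' := by
    have h1 : 0 < (m - ηb₀) * ψ t₀ := mul_pos (by linarith [hmt₀, ht₀]) hψt₀pos
    rw [hM'def]; linarith
  have hM'bd : ∀ t, t₀ ≤ t → (t - ηb₀) * ψ t ≤ M' := by
    intro t ht
    have hψt : 0 < ψ t := hψpos t ht
    have hψle : ψ t ≤ ψ t₀ := hψanti t₀ t le_rfl ht
    rcases le_total t m with h | h
    · have h1 : (t - ηb₀) * ψ t ≤ (m - ηb₀) * ψ t₀ :=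
        mul_le_mul (by linarith) hψle hψt.le (by linarith [hmt₀, ht₀])
      rw [hM'def]; linarith
    · have h1 : (t - m) * ψ t ≤ ∫ s in m..t, ψh s := by
        have heq : (t - m) * ψ t = ∫ _s in m..t, ψ t := by
          rw [intervalIntegral.integral_const, smul_eq_mul]
        rw [heq]
        apply intervalIntegral.integral_mono_on h intervalIntegrable_const
          (hψhcont.intervalIntegrable _ _)
        intro s hs
        rw [hψheq s (hmt₀.trans hs.1)]
        exact hψanti s t (hmt₀.trans hs.1) hs.2
      have h2 : (∫ s in m..t, ψh s) ≤ Ibar := by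
        rw [intervalIntegral.integral_of_le h]
        exact setIntegral_mono_set (hψhint.mono_set (Ioi_subset_Ioi hmt₀))
          (ae_of_all _ fun s => (hψhpos s).le) Ioc_subset_Ioi_self.eventuallyLE
      have h3 : (m - ηb₀) * ψ t ≤ (m - ηb₀) * ψ t₀ :=
        mul_le_mul_of_nonneg_left hψle (by linarith [hmt₀, ht₀])
      have h4 : (t - ηb₀) * ψ t = (t - m) * ψ t + (m - ηb₀) * ψ t := by ring
      rw [hM'def]; linarith
  -- F t ≤ C f t (t - ηb₀)
  have hFle : ∀ t, t₀ ≤ t → F t ≤ C * f t * (t - ηb₀) := by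
    intro t ht
    have hηt : ηb₀ < t := ht₀.trans_le ht
    rw [hF t, intervalIntegral.integral_of_le hηt.le]
    have h1 : (∫ s in Ioc ηb₀ t, f s) ≤ ∫ _s in Ioc ηb₀ t, C * f t := by
      apply setIntegral_mono_on hfc.integrableOn_Ioc
        (integrableOn_const measure_Ioc_lt_top.ne) measurableSet_Ioc
      intro s hs
      exact hfCinc s hs.1 t hηt hs.2
    have h2 : (∫ _s in Ioc ηb₀ t, C * f t) = (t - ηb₀) * (C * f t) := by
      rw [setIntegral_const, smul_eq_mul, Real.volume_real_Ioc_of_le (by linarith : ηb₀ ≤ t)]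
    rw [h2] at h1
    linarith [h1]
  have hfpos' : ∀ t, t₀ ≤ t → 0 < f t := fun t ht => hfpos t (ht₀.trans_le ht)
  have hFkey : ∀ t, t₀ ≤ t → F t ^ (χ * q) ≤ C * M' * f t := by
    intro t ht
    have hFt : 0 < F t := hFpos t (ht₀.trans_le ht)
    have he : χ * q = 1 + -q := by
      rw [hq]; field_simp; ring
    rw [he, Real.rpow_add hFt, Real.rpow_one]
    have h1 : F t * F t ^ (-q) ≤ C * f t * (t - ηb₀) * F t ^ (-q) :=
      mul_le_mul_of_nonneg_right (hFle t ht) (Real.rpow_pos_of_pos hFt _).le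
    have h2 : C * f t * (t - ηb₀) * F t ^ (-q) = C * f t * ((t - ηb₀) * ψ t) := by
      rw [hψeq]; ring
    have h3 : C * f t * ((t - ηb₀) * ψ t) ≤ C * f t * M' :=
      mul_le_mul_of_nonneg_left (hM'bd t ht) (mul_pos hC0 (hfpos' t ht)).le
    calc F t * F t ^ (-q) ≤ C * f t * ((t - ηb₀) * ψ t) := by rw [← h2]; exact h1
      _ ≤ C * f t * M' := h3
      _ = C * M' * f t := by ring
  -- choice of k
  set D : ℝ := C * M / (χ + 1) + C * M' * M + 1 with hDdef
  have hD : 0 < D := by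
    have h1 : 0 < C * M / (χ + 1) := div_pos (mul_pos hC0 hMpos) hχ1
    have h2 : 0 < C * M' * M := mul_pos (mul_pos hC0 hM'pos) hMpos
    rw [hDdef]; linarith
  set k : ℝ := min (Jv / H r₁) (min 1 ((ε / D) ^ (1/χ))) with hkdef
  have hkpos : 0 < k :=
    lt_min (div_pos hJpos hHr₁) (lt_min one_pos (Real.rpow_pos_of_pos (div_pos hε hD) _))
  have hk1 : k ≤ 1 := (min_le_right _ _).trans (min_le_left _ _)
  have hkJ : k * H r₁ ≤ Jv := by
    have h1 : k ≤ Jv / H r₁ := min_le_left _ _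
    rw [le_div_iff₀ hHr₁] at h1
    linarith
  have hkε : C * k ^ (χ + 1) / (χ + 1) * M + C * M' * k ^ χ * M ≤ ε := by
    have h1 : k ^ (χ + 1) ≤ k ^ χ :=
      Real.rpow_le_rpow_of_exponent_ge hkpos hk1 (by linarith)
    have h2 : k ^ χ ≤ ε / D := by
      have hle : k ≤ (ε / D) ^ (1/χ) := (min_le_right _ _).trans (min_le_right _ _)
      have h3 := Real.rpow_le_rpow hkpos.le hle hχ.le
      rwa [← Real.rpow_mul (div_pos hε hD).le, one_div, inv_mul_cancel₀ hχ.ne',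
        Real.rpow_one] at h3
    have hkχpos : 0 < k ^ χ := Real.rpow_pos_of_pos hkpos _
    have e1 : C * k ^ (χ + 1) / (χ + 1) * M ≤ k ^ χ * (C * M / (χ + 1)) := by
      have : C * k ^ (χ + 1) / (χ + 1) * M = k ^ (χ + 1) * (C * M / (χ + 1)) := by ring
      rw [this]
      exact mul_le_mul_of_nonneg_right h1 (div_nonneg (mul_nonneg hC0.le hMpos.le) hχ1.le)
    have e2 : C * M' * k ^ χ * M = k ^ χ * (C * M' * M) := by ring
    have e3 : k ^ χ * (C * M / (χ + 1)) + k ^ χ * (C * M' * M) = k ^ χ * (D - 1) := by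
      rw [hDdef]; ring
    have e4 : k ^ χ * (D - 1) ≤ ε / D * (D - 1) := by
      apply mul_le_mul_of_nonneg_right h2
      have h5 : 0 < C * M / (χ + 1) := div_pos (mul_pos hC0 hMpos) hχ1
      have h6 : 0 < C * M' * M := mul_pos (mul_pos hC0 hM'pos) hMpos
      rw [hDdef]; linarith
    have e5 : ε / D * (D - 1) = ε - ε / D := by
      field_simp
    have e6 : 0 ≤ ε / D := (div_pos hε hD).le
    linarith
  -- choice of R₁
  obtain ⟨r₂, hr₂⟩ := (hHtop.eventually (eventually_ge_atTop (I / k))).exists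
  have hr₂' : I / k ≤ H (max r₀ r₂) := hr₂.trans (hHmono.monotone (le_max_right _ _))
  have hy0 : H r₀ ≤ I / k := by
    rw [hH0]
    positivity
  obtain ⟨R₁, _, hHR₁⟩ :=
    intermediate_value_Icc (le_max_left r₀ r₂) hHcont.continuousOn ⟨hy0, hr₂'⟩
  have hkR₁ : k * H R₁ = I := by
    rw [hHR₁]
    field_simp
  have hr₁R₁ : r₁ < R₁ := by
    apply hHmono.lt_iff_lt.mp
    have h1 : H r₁ ≤ Jv / k := (le_div_iff₀ hkpos).2 (by linarith [hkJ])
    have h2 : Jv / k < I / k := by gcongr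
    rw [hHR₁]
    linarith
  have hr₀R₁ : r₀ < R₁ := hr₁.trans hr₁R₁
  -- the solution w
  set w : ℝ → ℝ := fun r => Ginv (k * H r) with hwdef
  set w' : ℝ → ℝ := fun r => k * bb r / ψh (w r) with hw'def
  have hwI : ∀ r, r < R₁ → k * H r < I := fun r hr => by
    rw [← hkR₁]; exact (mul_lt_mul_iff_right₀ hkpos).2 (hHmono hr)
  have hGw : ∀ r, r < R₁ → G (w r) = k * H r := fun r hr => hright _ (hwI r hr)
  have hwt₀ : ∀ r, r₀ ≤ r → r < R₁ → t₀ ≤ w r := by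
    intro r hr hrR
    apply hGmono.le_iff_le.mp
    rw [hGw r hrR, hGt₀]
    exact mul_nonneg hkpos.le (hHnn r hr)
  have hwgt : ∀ r, r₀ < r → r < R₁ → t₀ < w r := by
    intro r hr hrR
    apply hGmono.lt_iff_lt.mp
    rw [hGw r hrR, hGt₀]
    exact mul_pos hkpos (hH0 ▸ hHmono hr)
  have hwlam : ∀ r, r ∈ Icc r₀ r₁ → w r ≤ ηb₀ + lam := by
    intro r hr
    apply hGmono.le_iff_le.mp
    rw [hGw r (lt_of_le_of_lt hr.2 hr₁R₁), ← hJdef]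
    calc k * H r ≤ k * H r₁ := mul_le_mul_of_nonneg_left (hHmono.monotone hr.2) hkpos.le
      _ ≤ Jv := hkJ
  have hw'pos : ∀ r, 0 < w' r := fun r => div_pos (mul_pos hkpos (hbbpos r)) (hψhpos _)
  have hwder : ∀ r, r < R₁ → HasDerivAt w (w' r) r := by
    intro r hr
    have h1 := hinvder (k * H r) (hwI r hr)
    have h2 : HasDerivAt (fun s => k * H s) (k * bb r) r := (hHder r).const_mul k
    have h3 := h1.comp r h2
    have heq : (ψh (Ginv (k * H r)))⁻¹ * (k * bb r) = w' r := by
      simp only [hw'def, hwdef]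
      rw [div_eq_mul_inv, mul_comm]
    rw [← heq]
    exact h3
  -- facts about φ
  have hφmono : StrictMonoOn φ (Ici 0) := by
    apply strictMonoOn_of_deriv_pos (convex_Ici 0) hφc
    intro x hx
    rw [interior_Ici] at hx
    rw [(hφd x hx).deriv]
    exact hφ'pos x hx
  have hφpos : ∀ v : ℝ, 0 < v → 0 < φ v := by
    intro v hv
    have h := hφmono self_mem_Ici (mem_Ici.2 hv.le) hv
    rwa [hφ0] at h
  set ψD : ℝ → ℝ := fun t => f t * (-q) * F t ^ (-q - 1) with hψDdef
  set g : ℝ → ℝ := fun r =>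
    φ' (w' r) * ((k * βb' r * ψh (w r) - k * bb r * (ψD (w r) * w' r)) / ψh (w r) ^ 2)
    with hgdef
  -- the derivative of w' at interior points
  have hw'der : ∀ r, r₀ < r → r < R₁ →
      HasDerivAt w' ((k * βb' r * ψh (w r) - k * bb r * (ψD (w r) * w' r)) / ψh (w r) ^ 2) r := by
    intro r hr₀r hrR
    have hIci : Ici r₀ ∈ 𝓝 r := Ici_mem_nhds hr₀r
    have hbbd : HasDerivAt bb (βb' r) r := by
      have h1 : HasDerivAt βb (βb' r) r := (hβbd r hr₀r.le).hasDerivAt hIci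
      apply h1.congr_of_eventuallyEq
      filter_upwards [Ioi_mem_nhds hr₀r] with t ht
      simp only [hbbdef, max_eq_left (le_of_lt (mem_Ioi.1 ht))]
    have hwt : t₀ < w r := hwgt r hr₀r hrR
    have hψder : HasDerivAt ψh (ψD (w r)) (w r) := by
      have h1 : HasDerivAt (fun t => F t ^ (-q)) (f (w r) * (-q) * F (w r) ^ (-q - 1)) (w r) :=
        (hFder (w r)).rpow_const (Or.inl (hFpos _ (ht₀.trans hwt)).ne')
      have h2 : HasDerivAt (fun t => F t ^ (-q)) (ψD (w r)) (w r) := h1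
      apply h2.congr_of_eventuallyEq
      filter_upwards [Ioi_mem_nhds hwt] with t ht
      simp only [hψhdef, hψdef, max_eq_left (le_of_lt (mem_Ioi.1 ht))]
    have hc : HasDerivAt (fun s => k * bb s) (k * βb' r) r := hbbd.const_mul k
    have hd : HasDerivAt (fun s => ψh (w s)) (ψD (w r) * w' r) r :=
      hψder.comp r (hwder r hrR)
    exact hc.div hd (hψhpos _).ne'
  refine ⟨R₁, hr₁R₁, w, w', g, ?_, ?_, ?_, ?_, ?_, ?_, ?_, ?_⟩
  · intro r hr
    exact (hwder r hr.2).hasDerivWithinAt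
  · intro r hr
    apply ContinuousAt.continuousWithinAt
    simp only [hw'def]
    exact (continuousAt_const.mul hbbcont.continuousAt).div
      (hψhcont.continuousAt.comp (hwder r hr.2).continuousAt) (hψhpos _).ne'
  · intro r hr
    exact hwt₀ r hr.1 hr.2
  · intro r hr
    have h := (hφd (w' r) (hw'pos r)).comp r (hw'der r hr.1 hr.2)
    exact h
  · -- the main differential inequality
    intro r hr
    obtain ⟨hr₀r, hrR⟩ := hr
    have hwt : t₀ < w r := hwgt r hr₀r hrR
    have hFt : 0 < F (w r) := hFpos _ (ht₀.trans hwt)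
    have hft : 0 < f (w r) := hfpos' _ hwt.le
    have hvpos : 0 < w' r := hw'pos r
    have hφv : 0 < φ (w' r) := hφpos _ hvpos
    have hφ'v : 0 < φ' (w' r) := hφ'pos _ hvpos
    have hbr : bb r = βb r := hbbeq r hr₀r.le
    have hβr : 0 < β r := hβpos r hr₀r.le
    have hθr : 0 ≤ θ r := hθnn r hr₀r.le
    have hβbr : 0 < βb r := hβbpos r hr₀r.le
    have hβb'r : βb' r ≤ 0 := hβb'np r hr₀r.le
    set u : ℝ := F (w r) ^ q with hudef
    have hu : 0 < u := Real.rpow_pos_of_pos hFt q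
    have hψt : ψh (w r) = u⁻¹ := by
      rw [hψheq _ hwt.le, hψeq, hudef, Real.rpow_neg hFt.le]
    have hqχ : q * χ = 1 - q := by rw [hq]; field_simp; ring
    have huχ : u ^ χ = F (w r) / u := by
      rw [hudef, ← Real.rpow_mul hFt.le, hqχ, Real.rpow_sub hFt, Real.rpow_one]
    have hvu : w' r = k * βb r * u := by
      simp only [hw'def]
      rw [hψt, hbr]
      field_simp
    have hvχ : w' r ^ χ = k ^ χ * βb r ^ χ * (F (w r) / u) := by
      rw [hvu, Real.mul_rpow (mul_nonneg hkpos.le hβbr.le) hu.le,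
        Real.mul_rpow hkpos.le hβbr.le, huχ]
    have hFχq : F (w r) / u ≤ C * M' * f (w r) := by
      have h1 : F (w r) ^ (χ * q) = F (w r) / u := by
        rw [show χ * q = q * χ by ring, hqχ, Real.rpow_sub hFt, Real.rpow_one, hudef]
      rw [← h1]
      exact hFkey _ hwt.le
    have hψDval : ψD (w r) = -(f (w r) * q / (u * F (w r))) := by
      simp only [hψDdef]
      have h1 : F (w r) ^ (-q - 1) = (u * F (w r))⁻¹ := by
        rw [show -q - 1 = -(q + 1) by ring, Real.rpow_neg hFt.le, Real.rpow_add hFt,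
          Real.rpow_one, hudef]
      rw [h1]
      field_simp
    set Bv : ℝ := k * βb r * (f (w r) * q / (u * F (w r))) * w' r * u ^ 2 with hBvdef
    have hBvpos : 0 < Bv := by
      rw [hBvdef]
      have h1 : 0 < f (w r) * q / (u * F (w r)) := div_pos (mul_pos hft hq0) (mul_pos hu hFt)
      exact mul_pos (mul_pos (mul_pos (mul_pos hkpos hβbr) h1) hvpos) (pow_pos hu 2)
    have hgle : g r ≤ φ' (w' r) * Bv := by
      simp only [hgdef]
      apply mul_le_mul_of_nonneg_left _ hφ'v.le
      rw [hψt, hψDval, hbr]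
      have h2 : (u⁻¹ : ℝ) ^ 2 = (u ^ 2)⁻¹ := by rw [inv_pow]
      rw [h2, div_eq_mul_inv, inv_inv]
      have hexp : (k * βb' r * u⁻¹ - k * βb r * (-(f (w r) * q / (u * F (w r))) * w' r)) * u ^ 2
          = k * βb' r * u + Bv := by
        rw [hBvdef]
        field_simp
        ring
      rw [hexp]
      have h3 : k * βb' r * u ≤ 0 :=
        mul_nonpos_of_nonpos_of_nonneg (mul_nonpos_of_nonneg_of_nonpos hkpos.le hβb'r) hu.le
      linarith
    have hA : g r ≤ C * φ (w' r) / w' r * Bv := by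
      have hB : φ' (w' r) ≤ C * φ (w' r) / w' r := by
        rw [le_div_iff₀ hvpos]
        have h := hφbound (w' r) hvpos
        linarith [mul_comm (φ' (w' r)) (w' r)]
      calc g r ≤ φ' (w' r) * Bv := hgle
        _ ≤ C * φ (w' r) / w' r * Bv := mul_le_mul_of_nonneg_right hB hBvpos.le
    have hkey : (C * Bv / w' r + θ r) * w' r ^ χ ≤ ε * β r * f (w r) := by
      have hBvv : Bv / w' r = k * βb r * (f (w r) * q / (u * F (w r))) * u ^ 2 := by
        rw [hBvdef]
        field_simp
      have hT1 : C * (Bv / w' r) * w' r ^ χ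
          = C * (k ^ χ * k) * (βb r ^ χ * βb r) * f (w r) * q := by
        rw [hBvv, hvχ]
        field_simp
      have hkχ1 : k ^ χ * k = k ^ (χ + 1) := (Real.rpow_add_one hkpos.ne' χ).symm
      have hbχ1 : βb r ^ χ * βb r = βb r ^ (χ + 1) := (Real.rpow_add_one hβbr.ne' χ).symm
      have hMr := hM r hr₀r.le
      have hMr' : max (βb r) (θ r) * βb r ^ χ ≤ M * β r := by
        rw [div_le_iff₀ hβr] at hMr
        linarith
      have hbb1 : βb r ^ (χ + 1) ≤ M * β r := by
        rw [← hbχ1]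
        calc βb r ^ χ * βb r = βb r * βb r ^ χ := mul_comm _ _
          _ ≤ max (βb r) (θ r) * βb r ^ χ :=
            mul_le_mul_of_nonneg_right (le_max_left _ _) (Real.rpow_nonneg hβbr.le χ)
          _ ≤ M * β r := hMr'
      have hbb2 : θ r * βb r ^ χ ≤ M * β r :=
        (mul_le_mul_of_nonneg_right (le_max_right _ _) (Real.rpow_nonneg hβbr.le χ)).trans hMr'
      have hexpand : (C * Bv / w' r + θ r) * w' r ^ χ
          = C * (Bv / w' r) * w' r ^ χ + θ r * w' r ^ χ := by ring
      have ht2 : θ r * w' r ^ χ ≤ C * M' * k ^ χ * (M * β r) * f (w r) := by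
        rw [hvχ]
        have h1 : θ r * (k ^ χ * βb r ^ χ * (F (w r) / u))
            = θ r * βb r ^ χ * k ^ χ * (F (w r) / u) := by ring
        rw [h1]
        have hFu : 0 ≤ F (w r) / u := div_nonneg hFt.le hu.le
        have hkχnn : 0 ≤ k ^ χ := (Real.rpow_pos_of_pos hkpos χ).le
        calc θ r * βb r ^ χ * k ^ χ * (F (w r) / u)
            ≤ M * β r * k ^ χ * (F (w r) / u) :=
              mul_le_mul_of_nonneg_right (mul_le_mul_of_nonneg_right hbb2 hkχnn) hFu
          _ ≤ M * β r * k ^ χ * (C * M' * f (w r)) := by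
              apply mul_le_mul_of_nonneg_left hFχq
              exact mul_nonneg (mul_nonneg hMpos.le hβr.le) hkχnn
          _ = C * M' * k ^ χ * (M * β r) * f (w r) := by ring
      have ht1 : C * (k ^ χ * k) * (βb r ^ χ * βb r) * f (w r) * q
          ≤ C * k ^ (χ + 1) / (χ + 1) * (M * β r) * f (w r) := by
        rw [hkχ1, hbχ1]
        have h1 : C * k ^ (χ + 1) * βb r ^ (χ + 1) * f (w r) * q
            = C * k ^ (χ + 1) / (χ + 1) * βb r ^ (χ + 1) * f (w r) := by
          rw [hq]; ring
        rw [h1]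
        apply mul_le_mul_of_nonneg_right _ hft.le
        apply mul_le_mul_of_nonneg_left hbb1
        exact div_nonneg (mul_nonneg hC0.le (Real.rpow_pos_of_pos hkpos _).le) hχ1.le
      have hfin : C * k ^ (χ + 1) / (χ + 1) * (M * β r) * f (w r)
          + C * M' * k ^ χ * (M * β r) * f (w r) ≤ ε * β r * f (w r) := by
        have hbf : 0 ≤ β r * f (w r) := (mul_pos hβr hft).le
        have heq2 : C * k ^ (χ + 1) / (χ + 1) * (M * β r) * f (w r)
            + C * M' * k ^ χ * (M * β r) * f (w r)
            = (C * k ^ (χ + 1) / (χ + 1) * M + C * M' * k ^ χ * M) * (β r * f (w r)) := by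
          ring
        rw [heq2]
        calc (C * k ^ (χ + 1) / (χ + 1) * M + C * M' * k ^ χ * M) * (β r * f (w r))
            ≤ ε * (β r * f (w r)) := mul_le_mul_of_nonneg_right hkε hbf
          _ = ε * β r * f (w r) := by ring
      rw [hexpand, hT1]
      calc C * (k ^ χ * k) * (βb r ^ χ * βb r) * f (w r) * q + θ r * w' r ^ χ
          ≤ C * k ^ (χ + 1) / (χ + 1) * (M * β r) * f (w r)
            + C * M' * k ^ χ * (M * β r) * f (w r) := add_le_add ht1 ht2
        _ ≤ ε * β r * f (w r) := hfin
    have hVχ : 0 < w' r ^ χ := Real.rpow_pos_of_pos hvpos χ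
    have hstep : C * Bv / w' r + θ r ≤ ε * β r * f (w r) / w' r ^ χ :=
      (le_div_iff₀ hVχ).2 hkey
    have hmul := mul_le_mul_of_nonneg_right hstep hφv.le
    have hL : g r + θ r * φ (w' r) ≤ (C * Bv / w' r + θ r) * φ (w' r) := by
      have h1 : (C * Bv / w' r + θ r) * φ (w' r)
          = C * φ (w' r) / w' r * Bv + θ r * φ (w' r) := by ring
      rw [h1]
      linarith [hA]
    have hR : ε * β r * f (w r) / w' r ^ χ * φ (w' r)
        = ε * β r * f (w r) * (φ (w' r) / w' r ^ χ) := by ring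
    calc g r + θ r * φ (w' r) ≤ (C * Bv / w' r + θ r) * φ (w' r) := hL
      _ ≤ ε * β r * f (w r) / w' r ^ χ * φ (w' r) := hmul
      _ = ε * β r * f (w r) * (φ (w' r) / w' r ^ χ) := hR
  · intro r _
    exact hw'pos r
  · -- blow-up at R₁
    rw [tendsto_atTop]
    intro bnd
    have hc : G (max bnd t₀) < I := hGlt _
    have hmem : {r : ℝ | G (max bnd t₀) < k * H r} ∈ 𝓝 R₁ := by
      apply IsOpen.mem_nhds
      · exact isOpen_lt continuous_const (continuous_const.mul hHcont)
      · show G (max bnd t₀) < k * H R₁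
        rw [hkR₁]
        exact hc
    filter_upwards [mem_nhdsWithin_of_mem_nhds hmem, self_mem_nhdsWithin] with r hr1 hr2
    have h1 : G (max bnd t₀) < G (w r) := by
      rw [hGw r hr2]
      exact hr1
    have h2 := (hGmono.lt_iff_lt.mp h1).le
    calc bnd ≤ max bnd t₀ := le_max_left _ _
      _ ≤ w r := h2
  · intro r hr
    exact ⟨hwt₀ r hr.1 (lt_of_le_of_lt hr.2 hr₁R₁), hwlam r hr⟩
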